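/- (Valiant's circuit-to-polytope construction) Let C be a boolean circuit with q input bits and t gates (each AND or OR, with NOT handled by substitution), and let Q ⊆ [0,1]^{q+t} be the polytope obtained by writing, for each AND gate s = x ∧ y, the inequalities x + y − s ≤ 1, −x + s ≤ 0, −y + s ≤ 0, s ≥ 0, and for each OR gate s = x ∨ y, the inequalities −x − y + s ≤ 0, x − s ≤ 0, y − s ≤ 0, s ≤ 1. Then Q has the x-0/1 property: every 0/1 assignment to the input variables extends uniquely to a point of Q, that extension is 0/1-valued, and its gate-variable values equal the values computed by the circuit. -/

import Mathlib

/-- 0/1 real vector corresponding to a boolean vector. -/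
def bvec {q : ℕ} (x : Fin q → Bool) : Fin q → ℝ := fun j => if x j then 1 else 0

/-- A boolean circuit with `q` inputs and `t` gates, each an AND or OR gate,
whose two inputs are (possibly negated) references to input variables or
earlier gates; NOT gates are handled by the negation flags (substitution). -/
structure BoolCircuit (q t : ℕ) where
  isAnd : Fin t → Bool
  in1 : Fin t → Fin q ⊕ Fin t
  neg1 : Fin t → Bool
  in2 : Fin t → Fin q ⊕ Fin t
  neg2 : Fin t → Bool
  acyc1 : ∀ i j, in1 i = Sum.inr j → (j : ℕ) < (i : ℕ)
  acyc2 : ∀ i j, in2 i = Sum.inr j → (j : ℕ) < (i : ℕ)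

/-- Real value of a (possibly negated) wire reference. -/
def rval {q t : ℕ} (x : Fin q → ℝ) (y : Fin t → ℝ) (r : Fin q ⊕ Fin t) (neg : Bool) : ℝ :=
  if neg then 1 - Sum.elim x y r else Sum.elim x y r

/-- Boolean value of a (possibly negated) wire reference. -/
def lval {q t : ℕ} (x : Fin q → Bool) (y : Fin t → Bool) (r : Fin q ⊕ Fin t) (neg : Bool) :
    Bool :=
  xor (Sum.elim x y r) neg

/-- `y` is the vector of gate values computed by the circuit on input `x`. -/
def evalSpec {q t : ℕ} (C : BoolCircuit q t) (x : Fin q → Bool) (y : Fin t → Bool) : Prop :=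
  ∀ i, y i =
    if C.isAnd i then lval x y (C.in1 i) (C.neg1 i) && lval x y (C.in2 i) (C.neg2 i)
    else lval x y (C.in1 i) (C.neg1 i) || lval x y (C.in2 i) (C.neg2 i)

/-- Valiant's polytope `Q ⊆ [0,1]^{q+t}` built from the circuit: four inequalities
per AND gate and per OR gate. -/
def circuitPolytope {q t : ℕ} (C : BoolCircuit q t) : Set ((Fin q → ℝ) × (Fin t → ℝ)) :=
  {p | (∀ j, 0 ≤ p.1 j ∧ p.1 j ≤ 1) ∧ (∀ i, 0 ≤ p.2 i ∧ p.2 i ≤ 1) ∧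
    ∀ i,
      if C.isAnd i then
        rval p.1 p.2 (C.in1 i) (C.neg1 i) + rval p.1 p.2 (C.in2 i) (C.neg2 i) - p.2 i ≤ 1 ∧
        -rval p.1 p.2 (C.in1 i) (C.neg1 i) + p.2 i ≤ 0 ∧
        -rval p.1 p.2 (C.in2 i) (C.neg2 i) + p.2 i ≤ 0 ∧
        0 ≤ p.2 i
      else
        -rval p.1 p.2 (C.in1 i) (C.neg1 i) - rval p.1 p.2 (C.in2 i) (C.neg2 i) + p.2 i ≤ 0 ∧
        rval p.1 p.2 (C.in1 i) (C.neg1 i) - p.2 i ≤ 0 ∧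
        rval p.1 p.2 (C.in2 i) (C.neg2 i) - p.2 i ≤ 0 ∧
        p.2 i ≤ 1}

theorem circuit_polytope_x01 {q t : ℕ} (C : BoolCircuit q t)
    (x : Fin q → Bool) (y : Fin t → Bool) (hy : evalSpec C x y) :
    (bvec x, bvec y) ∈ circuitPolytope C ∧
    ∀ p ∈ circuitPolytope C, p.1 = bvec x → p = (bvec x, bvec y) := by
  have rval01 : ∀ (u : Fin q → ℝ) (v : Fin t → ℝ) (r : Fin q ⊕ Fin t) (neg : Bool),
      Sum.elim u v r = (if Sum.elim x y r then (1:ℝ) else 0) →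
      rval u v r neg = (if lval x y r neg then (1:ℝ) else 0) := by
    intro u v r neg h
    cases neg <;> cases hb : Sum.elim x y r <;>
      simp [rval, lval, h, hb]
  have hbvec : ∀ r : Fin q ⊕ Fin t,
      Sum.elim (bvec x) (bvec y) r = (if Sum.elim x y r then (1:ℝ) else 0) := by
    intro r; cases r <;> simp [bvec] <;> rfl
  constructor
  · refine ⟨fun j => by simp [bvec]; split <;> norm_num,
      fun i => by simp [bvec]; split <;> norm_num, fun i => ?_⟩
    have h1 := rval01 (bvec x) (bvec y) (C.in1 i) (C.neg1 i) (hbvec _)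
    have h2 := rval01 (bvec x) (bvec y) (C.in2 i) (C.neg2 i) (hbvec _)
    have hyi := hy i
    cases hA : C.isAnd i <;>
      cases ha : lval x y (C.in1 i) (C.neg1 i) <;>
        cases hb : lval x y (C.in2 i) (C.neg2 i) <;>
          simp [hA, ha, hb] at h1 h2 hyi ⊢ <;>
            simp [bvec, hyi, h1, h2]
  · rintro ⟨u, v⟩ ⟨hu, hv, hg⟩ hux
    simp only at hux
    subst hux
    have key : ∀ n, ∀ i : Fin t, (i : ℕ) = n → v i = bvec y i := by
      intro n
      induction n using Nat.strong_induction_on with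
      | _ n ih =>
        intro i hi
        have e1 : Sum.elim (bvec x) v (C.in1 i) = (if Sum.elim x y (C.in1 i) then (1:ℝ) else 0) := by
          cases hr : C.in1 i with
          | inl j => simp [bvec] <;> rfl
          | inr j =>
            have := C.acyc1 i j hr
            exact (ih j (by omega) j rfl)
        have e2 : Sum.elim (bvec x) v (C.in2 i) = (if Sum.elim x y (C.in2 i) then (1:ℝ) else 0) := by
          cases hr : C.in2 i with
          | inl j => simp [bvec] <;> rfl
          | inr j =>
            have := C.acyc2 i j hr
            exact (ih j (by omega) j rfl)
        have h1 := rval01 (bvec x) v (C.in1 i) (C.neg1 i) e1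
        have h2 := rval01 (bvec x) v (C.in2 i) (C.neg2 i) e2
        have hgi := hg i
        have hyi := hy i
        have hv0 := (hv i).1
        have hv1 := (hv i).2
        cases hA : C.isAnd i <;>
          cases ha : lval x y (C.in1 i) (C.neg1 i) <;>
            cases hb : lval x y (C.in2 i) (C.neg2 i) <;>
              simp [hA, ha, hb] at h1 h2 hyi hgi <;>
                simp [bvec, hyi, h1, h2] at hgi ⊢ <;> linarith
    have hveq : v = bvec y := funext fun i => key i i rfl
    simp [hveq]
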